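/- Let X be a real Hilbert space, C ⊆ X a nonempty closed set, and x₀ ∈ X\C. Then d_C is DC on the ball B(x₀, d_C(x₀)/2): there exist functions g, h defined and convex on B(x₀, d_C(x₀)/2) such that d_C(x) = g(x) − h(x) for all x ∈ B(x₀, d_C(x₀)/2). In fact one may take g(x) = (L/2)‖x‖² with L = 4/d_C(x₀) and h(x) = sup_{y∈C} [(L/2)‖x‖² − ‖x−y‖]. -/

import Mathlib

open Metric Filter Topology

private lemma comb_sq {X : Type*} [NormedAddCommGroup X] [InnerProductSpace ℝ X]
    (x y : X) (t s : ℝ) (ht : 0 ≤ t) (hs : 0 ≤ s) (hts : t + s = 1) :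
    ‖t • x + s • y‖ ^ 2 = t * ‖x‖ ^ 2 + s * ‖y‖ ^ 2 - t * s * ‖x - y‖ ^ 2 := by
  have h1 : ‖t • x + s • y‖ ^ 2
      = ‖t • x‖ ^ 2 + 2 * inner ℝ (t • x) (s • y) + ‖s • y‖ ^ 2 := norm_add_sq_real _ _
  have h2 : ‖x - y‖ ^ 2 = ‖x‖ ^ 2 - 2 * inner ℝ x y + ‖y‖ ^ 2 := norm_sub_sq_real x y
  have h3 : (inner ℝ (t • x) (s • y) : ℝ) = t * s * inner ℝ x y := by
    rw [real_inner_smul_left, real_inner_smul_right]; ring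
  have h4 : ‖t • x‖ = t * ‖x‖ := by rw [norm_smul, Real.norm_eq_abs, abs_of_nonneg ht]
  have h5 : ‖s • y‖ = s * ‖y‖ := by rw [norm_smul, Real.norm_eq_abs, abs_of_nonneg hs]
  rw [h1, h3, h4, h5]
  linear_combination t * s * h2 + (t * ‖x‖ ^ 2 + s * ‖y‖ ^ 2) * hts

private lemma norm_comb_aux {X : Type*} [NormedAddCommGroup X] [InnerProductSpace ℝ X]
    (a b : X) (r t s : ℝ) (hr : 0 < r) (ha : r ≤ ‖a‖) (hb : r ≤ ‖b‖)
    (ht : 0 ≤ t) (hs : 0 ≤ s) (hts : t + s = 1) :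
    t * ‖a‖ + s * ‖b‖ - ‖t • a + s • b‖ ≤ t * s * ‖a - b‖ ^ 2 / r := by
  set A := t * ‖a‖ + s * ‖b‖ with hA_def
  set B := ‖t • a + s • b‖ with hB_def
  have hBA : B ≤ A := by
    calc B ≤ ‖t • a‖ + ‖s • b‖ := norm_add_le _ _
      _ = A := by rw [norm_smul, norm_smul, Real.norm_eq_abs, Real.norm_eq_abs,
            abs_of_nonneg ht, abs_of_nonneg hs]
  have hrA : r ≤ A := by nlinarith
  have hB0 : 0 ≤ B := norm_nonneg _
  have hsq : B ^ 2 = t * ‖a‖ ^ 2 + s * ‖b‖ ^ 2 - t * s * ‖a - b‖ ^ 2 :=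
    comb_sq a b t s ht hs hts
  have hkey : A ^ 2 - B ^ 2 ≤ t * s * ‖a - b‖ ^ 2 := by
    nlinarith [sq_nonneg (‖a‖ - ‖b‖), mul_nonneg ht hs]
  rw [le_div_iff₀ hr]
  nlinarith [mul_nonneg (sub_nonneg.2 hBA) (sub_nonneg.2 hrA),
    mul_nonneg (sub_nonneg.2 hBA) hB0]

theorem infDist_locally_DC_hilbert
    (X : Type*) [NormedAddCommGroup X] [InnerProductSpace ℝ X] [CompleteSpace X]
    (C : Set X) (hCclosed : IsClosed C) (hCne : C.Nonempty)
    (x₀ : X) (hx₀ : x₀ ∉ C) :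
    ConvexOn ℝ (Metric.closedBall x₀ (Metric.infDist x₀ C / 2))
      (fun x : X => 4 / Metric.infDist x₀ C / 2 * ‖x‖ ^ 2) ∧
    ConvexOn ℝ (Metric.closedBall x₀ (Metric.infDist x₀ C / 2))
      (fun x : X => ⨆ y : C, (4 / Metric.infDist x₀ C / 2 * ‖x‖ ^ 2 - ‖x - (y : X)‖)) ∧
    ∀ x ∈ Metric.closedBall x₀ (Metric.infDist x₀ C / 2),
      Metric.infDist x C = 4 / Metric.infDist x₀ C / 2 * ‖x‖ ^ 2
        - ⨆ y : C, (4 / Metric.infDist x₀ C / 2 * ‖x‖ ^ 2 - ‖x - (y : X)‖) := by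
  have hd : 0 < Metric.infDist x₀ C := (hCclosed.notMem_iff_infDist_pos hCne).mp hx₀
  set d : ℝ := Metric.infDist x₀ C with hd_def
  set c : ℝ := 4 / d / 2 with hc_def
  have hc0 : 0 < c := by rw [hc_def]; positivity
  have : Nonempty C := hCne.to_subtype
  -- points of the ball are at distance ≥ d/2 from C
  have hfar : ∀ x ∈ Metric.closedBall x₀ (d / 2), ∀ y ∈ C, d / 2 ≤ dist x y := by
    intro x hx y hy
    have h1 : d ≤ Metric.infDist x C + dist x₀ x := Metric.infDist_le_infDist_add_dist
    have h2 : Metric.infDist x C ≤ dist x y := Metric.infDist_le_dist_of_mem hy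
    have h3 : dist x x₀ ≤ d / 2 := Metric.mem_closedBall.1 hx
    rw [dist_comm] at h3
    linarith
  -- the supremum formula
  have hsup : ∀ x : X, (⨆ y : C, (c * ‖x‖ ^ 2 - ‖x - (y : X)‖))
      = c * ‖x‖ ^ 2 - Metric.infDist x C := by
    intro x
    have hbdd : BddAbove (Set.range fun y : C => c * ‖x‖ ^ 2 - ‖x - (y : X)‖) := by
      refine ⟨c * ‖x‖ ^ 2, ?_⟩
      rintro _ ⟨y, rfl⟩
      have := norm_nonneg (x - (y : X))
      simp only
      linarith
    apply le_antisymm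
    · refine ciSup_le fun y => ?_
      have h := Metric.infDist_le_dist_of_mem (x := x) y.2
      rw [dist_eq_norm] at h
      linarith
    · by_contra hlt
      push_neg at hlt
      set S := ⨆ y : C, (c * ‖x‖ ^ 2 - ‖x - (y : X)‖) with hS_def
      have hS : Metric.infDist x C < c * ‖x‖ ^ 2 - S := by linarith
      obtain ⟨y, hyC, hylt⟩ := (Metric.infDist_lt_iff hCne).1 hS
      have hle : c * ‖x‖ ^ 2 - ‖x - y‖ ≤ S := le_ciSup hbdd ⟨y, hyC⟩
      rw [dist_eq_norm] at hylt
      linarith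
  -- semiconcavity of infDist on the ball
  have hconc : ∀ x₁ ∈ Metric.closedBall x₀ (d / 2), ∀ x₂ ∈ Metric.closedBall x₀ (d / 2),
      ∀ t s : ℝ, 0 ≤ t → 0 ≤ s → t + s = 1 →
      t * Metric.infDist x₁ C + s * Metric.infDist x₂ C - c * (t * s * ‖x₁ - x₂‖ ^ 2)
        ≤ Metric.infDist (t • x₁ + s • x₂) C := by
    intro x₁ hx₁ x₂ hx₂ t s ht hs hts
    apply le_of_forall_pos_le_add
    intro ε hε
    have hlt : Metric.infDist (t • x₁ + s • x₂) C < Metric.infDist (t • x₁ + s • x₂) C + ε :=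
      lt_add_of_pos_right _ hε
    obtain ⟨y, hyC, hylt⟩ := (Metric.infDist_lt_iff hCne).1 hlt
    have ha : d / 2 ≤ ‖x₁ - y‖ := by
      have := hfar x₁ hx₁ y hyC; rwa [dist_eq_norm] at this
    have hb : d / 2 ≤ ‖x₂ - y‖ := by
      have := hfar x₂ hx₂ y hyC; rwa [dist_eq_norm] at this
    have haux := norm_comb_aux (x₁ - y) (x₂ - y) (d / 2) t s (by linarith) ha hb ht hs hts
    have hcombeq : t • (x₁ - y) + s • (x₂ - y) = t • x₁ + s • x₂ - y := by
      have h : t • y + s • y = y := by rw [← add_smul, hts, one_smul]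
      rw [smul_sub, smul_sub,
        show t • x₁ - t • y + (s • x₂ - s • y) = t • x₁ + s • x₂ - (t • y + s • y) from by abel,
        h]
    have hab : (x₁ - y) - (x₂ - y) = x₁ - x₂ := by abel
    rw [hcombeq, hab] at haux
    have hdiv : t * s * ‖x₁ - x₂‖ ^ 2 / (d / 2) = c * (t * s * ‖x₁ - x₂‖ ^ 2) := by
      rw [hc_def]; field_simp; ring
    rw [hdiv] at haux
    have h1 : Metric.infDist x₁ C ≤ ‖x₁ - y‖ := by
      have := Metric.infDist_le_dist_of_mem hyC (x := x₁); rwa [dist_eq_norm] at this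
    have h2 : Metric.infDist x₂ C ≤ ‖x₂ - y‖ := by
      have := Metric.infDist_le_dist_of_mem hyC (x := x₂); rwa [dist_eq_norm] at this
    rw [dist_eq_norm] at hylt
    nlinarith [mul_le_mul_of_nonneg_left h1 ht, mul_le_mul_of_nonneg_left h2 hs]
  refine ⟨?_, ?_, ?_⟩
  · refine ⟨convex_closedBall _ _, ?_⟩
    intro x hx y hy t s ht hs hts
    simp only [smul_eq_mul]
    have hcomb := comb_sq x y t s ht hs hts
    nlinarith [mul_nonneg (mul_nonneg ht hs) (sq_nonneg ‖x - y‖), hc0.le,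
      mul_nonneg hc0.le (mul_nonneg (mul_nonneg ht hs) (sq_nonneg ‖x - y‖))]
  · have heq : (fun x : X => ⨆ y : C, (4 / Metric.infDist x₀ C / 2 * ‖x‖ ^ 2 - ‖x - (y : X)‖))
        = fun x : X => c * ‖x‖ ^ 2 - Metric.infDist x C := by
      funext x; exact hsup x
    rw [heq]
    refine ⟨convex_closedBall _ _, ?_⟩
    intro x hx y hy t s ht hs hts
    simp only [smul_eq_mul]
    have hcomb := comb_sq x y t s ht hs hts
    have hcomb' : c * ‖t • x + s • y‖ ^ 2
        = c * (t * ‖x‖ ^ 2) + c * (s * ‖y‖ ^ 2) - c * (t * s * ‖x - y‖ ^ 2) := by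
      rw [hcomb]; ring
    have hc' := hconc x hx y hy t s ht hs hts
    nlinarith [hcomb', hc']
  · intro x hx
    rw [hsup x]
    ring
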